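/- Let m and p be integers with m ≤ -2 and p ≥ 3. Then the rational numbers -1/m, (p+1)/(2p) and (p-2m-1)/(2p-4m) all lie strictly between 0 and 1, the sum (p+1)/(2p) + (p-2m-1)/(2p-4m) is greater than 1, and the triple (-1/m, (p+1)/(2p), (p-2m-1)/(2p-4m)) is not realizable. (This is the statement that M_{c_{m,p}}(O, m) = S²(-1, -1/m, (p+1)/2p, (p-2m-1)/(2p-4m)) is an L-space for m < -1.) -/

import Mathlib

/-- A triple of rationals is *realizable* if there exist relatively prime positive
integers `a`, `k` with `0 < a ≤ k/2` such that the increasing rearrangement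
`(t₁, t₂, t₃)` of `(s₁, s₂, s₃)` satisfies `t₁ < 1/k`, `t₂ < a/k`, `t₃ < (k-a)/k`. -/
def Realizable (s₁ s₂ s₃ : ℚ) : Prop :=
  ∃ a k : ℕ, 0 < a ∧ 2 * a ≤ k ∧ Nat.Coprime a k ∧
    ∃ t₁ t₂ t₃ : ℚ, ({t₁, t₂, t₃} : Multiset ℚ) = ({s₁, s₂, s₃} : Multiset ℚ) ∧
      t₁ ≤ t₂ ∧ t₂ ≤ t₃ ∧
      t₁ < 1 / (k : ℚ) ∧ t₂ < (a : ℚ) / k ∧ t₃ < ((k : ℚ) - (a : ℚ)) / k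

/-- The statement that `M_{c_{m,p}}(O, m) = S²(-1, -1/m, (p+1)/2p, (p-2m-1)/(2p-4m))`
is an L-space for `m ≤ -2`, `p ≥ 3`. -/
theorem Mcmp_lspace (m p : ℤ) (hm : m ≤ -2) (hp : 3 ≤ p) :
    (0 < -1 / (m : ℚ) ∧ -1 / (m : ℚ) < 1) ∧
    (0 < ((p : ℚ) + 1) / (2 * p) ∧ ((p : ℚ) + 1) / (2 * p) < 1) ∧
    (0 < ((p : ℚ) - 2 * m - 1) / (2 * p - 4 * m) ∧
      ((p : ℚ) - 2 * m - 1) / (2 * p - 4 * m) < 1) ∧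
    1 < ((p : ℚ) + 1) / (2 * p) + ((p : ℚ) - 2 * m - 1) / (2 * p - 4 * m) ∧
    ¬ Realizable (-1 / (m : ℚ)) (((p : ℚ) + 1) / (2 * p))
      (((p : ℚ) - 2 * m - 1) / (2 * p - 4 * m)) := by
  have hM : (m : ℚ) ≤ -2 := by exact_mod_cast hm
  have hq : (3 : ℚ) ≤ (p : ℚ) := by exact_mod_cast hp
  have hM0 : (m : ℚ) < 0 := by linarith
  have h2q : (0 : ℚ) < 2 * p := by linarith
  have hD : (0 : ℚ) < 2 * (p : ℚ) - 4 * m := by linarith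
  have h1 : 0 < -1 / (m : ℚ) ∧ -1 / (m : ℚ) < 1 := by
    constructor
    · exact div_pos_iff.mpr (Or.inr ⟨by norm_num, hM0⟩)
    · rw [div_lt_iff_of_neg hM0]; linarith
  have h2 : 0 < ((p : ℚ) + 1) / (2 * p) ∧ ((p : ℚ) + 1) / (2 * p) < 1 := by
    constructor
    · positivity
    · rw [div_lt_one h2q]; linarith
  have h3 : 0 < ((p : ℚ) - 2 * m - 1) / (2 * p - 4 * m) ∧
      ((p : ℚ) - 2 * m - 1) / (2 * p - 4 * m) < 1 := by
    constructor
    · apply div_pos (by linarith) hD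
    · rw [div_lt_one hD]; linarith
  have hsum : 1 < ((p : ℚ) + 1) / (2 * p) + ((p : ℚ) - 2 * m - 1) / (2 * p - 4 * m) := by
    rw [div_add_div _ _ (ne_of_gt h2q) (ne_of_gt hD), lt_div_iff₀ (by positivity)]
    nlinarith [mul_pos h2q hD]
  refine ⟨h1, h2, h3, hsum, ?_⟩
  rintro ⟨a, k, ha, hak, -, t₁, t₂, t₃, hmul, h12, h23, ht1, ht2, ht3⟩
  have hk : 0 < k := by omega
  have hkQ : (0 : ℚ) < (k : ℚ) := by exact_mod_cast hk
  -- sum of the multiset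
  have hS := congrArg Multiset.sum hmul
  simp only [Multiset.insert_eq_cons, Multiset.sum_cons, Multiset.sum_singleton] at hS
  -- r₁ is a member, so t₁ ≤ r₁
  have hmem : -1 / (m : ℚ) ∈ ({t₁, t₂, t₃} : Multiset ℚ) := by
    rw [hmul]; simp
  simp only [Multiset.insert_eq_cons, Multiset.mem_cons, Multiset.mem_singleton] at hmem
  have ht1r : t₁ ≤ -1 / (m : ℚ) := by
    rcases hmem with h | h | h <;> rw [h] <;> linarith
  -- t₂ + t₃ < 1
  have hone : (a : ℚ) / k + ((k : ℚ) - (a : ℚ)) / k = 1 := by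
    field_simp
    ring
  have h23lt : t₂ + t₃ < 1 := by linarith
  linarith
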